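/- Define a recurrence bound: let λ ∈ (0,1), and suppose T : ℝ≥0 → ℝ≥0 satisfies T(k) = 0 for all k ≤ γ and T(k) ≤ max_{1/3 ≤ α ≤ 2/3} [T(αk + c·k^λ + c) + T((1−α)k + c·k^λ + c)] + c·k^λ + c for k > γ, where c > 0 is a constant. Then for every ε > 0 there exists a choice of γ (depending on ε, λ, c) such that T(k) ≤ ε·k for all k ≥ 0. -/

import Mathlib

open Real

lemma aux_concave {l : ℝ} (hl0 : 0 < l) (hl1 : l < 1) {a : ℝ}
    (h1 : 1/3 ≤ a) (h2 : a ≤ 2/3) :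
    (1/3:ℝ) ^ l + (2/3:ℝ) ^ l ≤ a ^ l + (1-a) ^ l := by
  have hcon := Real.concaveOn_rpow hl0.le hl1.le
  set t : ℝ := 2 - 3*a with ht
  have ht0 : 0 ≤ t := by simp [ht]; linarith
  have ht1 : t ≤ 1 := by simp [ht]; linarith
  have hx : (1/3:ℝ) ∈ Set.Ici (0:ℝ) := by norm_num
  have hy : (2/3:ℝ) ∈ Set.Ici (0:ℝ) := by norm_num
  have h₁ := hcon.2 hx hy ht0 (by linarith : (0:ℝ) ≤ 1 - t) (by ring)
  have h₂ := hcon.2 hy hx ht0 (by linarith : (0:ℝ) ≤ 1 - t) (by ring)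
  simp only [smul_eq_mul] at h₁ h₂
  have e1 : t * (1/3:ℝ) + (1-t) * (2/3:ℝ) = a := by rw [ht]; ring
  have e2 : t * (2/3:ℝ) + (1-t) * (1/3:ℝ) = 1 - a := by rw [ht]; ring
  rw [e1] at h₁
  rw [e2] at h₂
  nlinarith [h₁, h₂]

set_option maxHeartbeats 1000000 in
theorem recurrence_sublinear {l c : ℝ} (hl0 : 0 < l) (hl1 : l < 1) (hc : 0 < c) :
    ∀ ε > (0 : ℝ), ∃ γ > (0 : ℝ), ∀ T : ℝ → ℝ,
      (∀ k : ℝ, 0 ≤ T k) →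
      (∀ k : ℝ, 0 ≤ k → k ≤ γ → T k = 0) →
      (∀ k : ℝ, γ < k →
        T k ≤ sSup ((fun α : ℝ =>
            T (α * k + c * k ^ l + c) + T ((1 - α) * k + c * k ^ l + c)) ''
          Set.Icc (1/3 : ℝ) (2/3)) + c * k ^ l + c) →
      ∀ k : ℝ, 0 ≤ k → T k ≤ ε * k := by
  intro ε hε
  set r : ℝ := (1/3:ℝ) ^ l + (2/3:ℝ) ^ l with hrdef
  have hr1 : 1 < r := by
    have h1 : (1/3:ℝ) < (1/3:ℝ) ^ l := by
      have := Real.rpow_lt_rpow_of_exponent_gt (x := (1/3:ℝ)) (by norm_num) (by norm_num) hl1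
      rwa [Real.rpow_one] at this
    have h2 : (2/3:ℝ) < (2/3:ℝ) ^ l := by
      have := Real.rpow_lt_rpow_of_exponent_gt (x := (2/3:ℝ)) (by norm_num) (by norm_num) hl1
      rwa [Real.rpow_one] at this
    rw [hrdef]; linarith
  have hr2 : r ≤ 2 := by
    have h1 : (1/3:ℝ) ^ l ≤ 1 := Real.rpow_le_one (by norm_num) (by norm_num) hl0.le
    have h2 : (2/3:ℝ) ^ l ≤ 1 := Real.rpow_le_one (by norm_num) (by norm_num) hl0.le
    rw [hrdef]; linarith
  set d : ℝ := 6*c/(r-1) with hddef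
  have hd : 0 < d := div_pos (by linarith) (by linarith)
  have hrne : r - 1 ≠ 0 := by linarith
  have hdr : d*(r-1) = 6*c := by
    rw [hddef, div_mul_cancel₀ _ hrne]
  have hcd : c ≤ d := by
    have h1 : d*(r-1) ≤ d*1 := mul_le_mul_of_nonneg_left (by linarith) hd.le
    linarith
  set m : ℝ := min (1/(24*c)) (min (1/(3*d)) (ε/(3*d))) with hmdef
  have hm : 0 < m := by
    rw [hmdef]
    exact lt_min (by positivity) (lt_min (by positivity) (by positivity))
  set γ : ℝ := max (max 1 (24*c)) ((1/m) ^ ((1:ℝ)/(1-l))) with hγdef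
  have hγ1 : (1:ℝ) ≤ γ := le_trans (le_max_left _ _) (le_max_left _ _)
  have hγ0 : (0:ℝ) < γ := lt_of_lt_of_le one_pos hγ1
  have hγc : 24*c ≤ γ := le_trans (le_max_right _ _) (le_max_left _ _)
  have h1m : (0:ℝ) < 1/m := by positivity
  have hγm : γ ^ (l-1) ≤ m := by
    have hx : (1/m) ^ ((1:ℝ)/(1-l)) ≤ γ := le_max_right _ _
    have hxpos : (0:ℝ) < (1/m) ^ ((1:ℝ)/(1-l)) := Real.rpow_pos_of_pos h1m _
    calc γ ^ (l-1) ≤ ((1/m) ^ ((1:ℝ)/(1-l))) ^ (l-1) :=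
          Real.rpow_le_rpow_of_nonpos hxpos hx (by linarith)
      _ = (1/m) ^ (((1:ℝ)/(1-l)) * (l-1)) := by
          rw [← Real.rpow_mul h1m.le]
      _ = (1/m) ^ (-1:ℝ) := by
          congr 1
          have h1l : (1:ℝ) - l ≠ 0 := by linarith
          field_simp
          ring
      _ = m := by
          rw [Real.rpow_neg_one]
          simp
  set G : ℝ := γ ^ (l-1) with hGdef
  have hGpos : 0 < G := Real.rpow_pos_of_pos hγ0 _
  have hGm : G ≤ m := hγm
  have hm24 : m ≤ 1/(24*c) := min_le_left _ _
  have hm3d : m ≤ 1/(3*d) := le_trans (min_le_right _ _) (min_le_left _ _)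
  have hmε : m ≤ ε/(3*d) := le_trans (min_le_right _ _) (min_le_right _ _)
  have hcG : c * G ≤ 1/24 := by
    have h1 : c * G ≤ c * (1/(24*c)) :=
      mul_le_mul_of_nonneg_left (le_trans hGm hm24) hc.le
    have h2 : c * (1/(24*c)) = 1/24 := by field_simp
    linarith
  have h3dG : 3*(d*G) ≤ 1 := by
    have h1 : d * G ≤ d * (1/(3*d)) :=
      mul_le_mul_of_nonneg_left (le_trans hGm hm3d) hd.le
    have h2 : d * (1/(3*d)) = 1/3 := by field_simp
    linarith
  have h3dGε : 3*(d*G) ≤ ε := by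
    have h1 : d * G ≤ d * (ε/(3*d)) :=
      mul_le_mul_of_nonneg_left (le_trans hGm hmε) hd.le
    have h2 : d * (ε/(3*d)) = ε/3 := by field_simp
    linarith
  have hpow_split : ∀ x : ℝ, 0 < x → x ^ l = x ^ (l-1) * x := by
    intro x hx
    conv_lhs => rw [show l = (l-1)+1 by ring]
    rw [Real.rpow_add hx, Real.rpow_one]
  have hbase : ∀ x : ℝ, γ ≤ x → x ^ (l-1) ≤ G := by
    intro x hx
    exact Real.rpow_le_rpow_of_nonpos hγ0 hx (by linarith)
  -- nonnegativity of the potential on [γ/3, ∞)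
  have hΦnn : ∀ x : ℝ, γ/3 ≤ x → 0 ≤ d * (3*G*x - x^l) := by
    intro x hx
    have hx0 : 0 < x := lt_of_lt_of_le (by positivity) hx
    have h1 : x ^ (l-1) ≤ (γ/3) ^ (l-1) :=
      Real.rpow_le_rpow_of_nonpos (by positivity) hx (by linarith)
    have h2 : (γ/3:ℝ) ^ (l-1) = G * (3:ℝ)^(1-l) := by
      rw [Real.div_rpow hγ0.le (by norm_num), hGdef]
      rw [show (l-1) = -(1-l) by ring, Real.rpow_neg (by norm_num : (0:ℝ) ≤ 3)]
      field_simp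
    have h3 : (3:ℝ)^(1-l) ≤ 3 := by
      have := Real.rpow_le_rpow_of_exponent_le (by norm_num : (1:ℝ) ≤ 3) (by linarith : 1-l ≤ 1)
      rwa [Real.rpow_one] at this
    have h4 : x ^ (l-1) ≤ 3*G := by
      have h5 : G * (3:ℝ)^(1-l) ≤ G * 3 := mul_le_mul_of_nonneg_left h3 hGpos.le
      rw [h2] at h1; linarith
    have h6 : x ^ l ≤ 3*G*x := by
      rw [hpow_split x hx0]
      exact mul_le_mul_of_nonneg_right h4 hx0.le
    exact mul_nonneg hd.le (by linarith)
  clear_value r d m γ G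
  refine ⟨γ, hγ0, ?_⟩
  intro T hT0 hTz hrec
  -- the key induction
  have key : ∀ n : ℕ, ∀ k : ℝ, γ/3 ≤ k → k ≤ γ * (4/3:ℝ)^n →
      T k ≤ d * (3*G*k - k^l) := by
    intro n
    induction n with
    | zero =>
      intro k hk1 hk2
      rw [pow_zero, mul_one] at hk2
      rw [hTz k (by linarith) hk2]
      exact hΦnn k hk1
    | succ n ih =>
      intro k hk1 hk2
      rcases le_or_gt k γ with h | h
      · rw [hTz k (by linarith) h]
        exact hΦnn k hk1
      · -- main recursive case
        have hk0 : 0 < k := lt_trans hγ0 h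
        have hkl0 : 0 < k ^ l := Real.rpow_pos_of_pos hk0 l
        have hkl1 : 1 ≤ k ^ l := by
          calc (1:ℝ) = (1:ℝ) ^ l := (Real.one_rpow l).symm
            _ ≤ k ^ l := Real.rpow_le_rpow zero_le_one (by linarith) hl0.le
        have hcK0 : 0 < c * k^l := mul_pos hc hkl0
        have hcK : c ≤ c * k^l := by
          have := mul_le_mul_of_nonneg_left hkl1 hc.le
          linarith
        have hklG : k ^ l ≤ G * k := by
          rw [hpow_split k hk0]
          exact mul_le_mul_of_nonneg_right (hbase k h.le) hk0.le
        have heck : c ≤ k/24 := by linarith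
        have heK : c * k^l ≤ k/24 := by
          calc c * k^l ≤ c * (G*k) := mul_le_mul_of_nonneg_left hklG hc.le
            _ = (c*G)*k := by ring
            _ ≤ (1/24)*k := mul_le_mul_of_nonneg_right hcG hk0.le
            _ = k/24 := by ring
        have he12 : c * k^l + c ≤ k/12 := by linarith
        have hps : γ * (4/3:ℝ)^(n+1) = γ * (4/3:ℝ)^n * (4/3) := by
          rw [pow_succ]; ring
        -- subproblem bounds
        have hsub : ∀ β : ℝ, 1/3 ≤ β → β ≤ 2/3 →
            γ/3 ≤ β*k + c*k^l + c ∧ β*k + c*k^l + c ≤ γ * (4/3:ℝ)^n := by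
          intro β hβ1 hβ2
          have hb1 : 0 ≤ (β - 1/3)*k := mul_nonneg (by linarith) hk0.le
          have hb2 : 0 ≤ (2/3 - β)*k := mul_nonneg (by linarith) hk0.le
          constructor
          · linarith [hb1, hcK0]
          · have h2 : (3/4)*k ≤ γ * (4/3:ℝ)^n := by
              rw [hps] at hk2; linarith
            linarith [hb2, he12]
        -- the basic scalar inequality
        have hdrK : d*(r*k^l) = d*k^l + 6*(c*k^l) := by
          linear_combination k^l * hdr
        have hE : 6*(d*G)*(c*k^l+c) + (c*k^l+c) + d*k^l ≤ d*(r*k^l) := by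
          have e1 : (3*(d*G))*(c*k^l) ≤ 1*(c*k^l) :=
            mul_le_mul_of_nonneg_right h3dG hcK0.le
          have e2 : (3*(d*G))*c ≤ 1*c :=
            mul_le_mul_of_nonneg_right h3dG hc.le
          linarith [e1, e2, hcK, hdrK]
        have hmem : ∀ y ∈ ((fun α : ℝ =>
            T (α * k + c * k ^ l + c) + T ((1 - α) * k + c * k ^ l + c)) ''
          Set.Icc (1/3 : ℝ) (2/3)),
            y ≤ d * (3*G*k - k^l) - (c*k^l + c) := by
          rintro y ⟨α, hα, rfl⟩
          obtain ⟨hα1, hα2⟩ := hα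
          obtain ⟨hs1, hs2⟩ := hsub α hα1 hα2
          obtain ⟨ht1, ht2⟩ := hsub (1-α) (by linarith) (by linarith)
          have ih1 := ih (α*k + c*k^l + c) hs1 hs2
          have ih2 := ih ((1-α)*k + c*k^l + c) ht1 ht2
          have hαk0 : (0:ℝ) ≤ α*k := mul_nonneg (by linarith) hk0.le
          have hβk0 : (0:ℝ) ≤ (1-α)*k := mul_nonneg (by linarith) hk0.le
          have hc1 : α^l * k^l ≤ (α*k + c*k^l + c)^l := by
            calc α^l * k^l = (α*k)^l := (Real.mul_rpow (by linarith) hk0.le).symm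
              _ ≤ (α*k + c*k^l + c)^l :=
                  Real.rpow_le_rpow hαk0 (by linarith [hcK0]) hl0.le
          have hc2 : (1-α)^l * k^l ≤ ((1-α)*k + c*k^l + c)^l := by
            calc (1-α)^l * k^l = ((1-α)*k)^l := (Real.mul_rpow (by linarith) hk0.le).symm
              _ ≤ ((1-α)*k + c*k^l + c)^l :=
                  Real.rpow_le_rpow hβk0 (by linarith [hcK0]) hl0.le
          have hconc := aux_concave hl0 hl1 hα1 hα2
          have hS : r * k^l ≤ (α*k + c*k^l + c)^l + ((1-α)*k + c*k^l + c)^l := by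
            calc r * k^l = ((1/3:ℝ)^l + (2/3:ℝ)^l) * k^l := by rw [hrdef]
              _ ≤ (α^l + (1-α)^l) * k^l := mul_le_mul_of_nonneg_right hconc hkl0.le
              _ = α^l*k^l + (1-α)^l*k^l := by ring
              _ ≤ _ := add_le_add hc1 hc2
          have hSd : d*(r*k^l) ≤ d*((α*k + c*k^l + c)^l + ((1-α)*k + c*k^l + c)^l) :=
            mul_le_mul_of_nonneg_left hS hd.le
          show T (α * k + c * k ^ l + c) + T ((1 - α) * k + c * k ^ l + c) ≤
            d * (3*G*k - k^l) - (c*k^l + c)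
          linarith [ih1, ih2, hSd, hE]
        have hnn : 0 ≤ d * (3*G*k - k^l) - (c*k^l + c) := by
          have m1 : 3*d*(k^l) ≤ 3*d*(G*k) :=
            mul_le_mul_of_nonneg_left hklG (by positivity)
          have m2 : 0 ≤ (d - c)*k^l := mul_nonneg (by linarith) hkl0.le
          linarith [m1, m2, hcK]
        have hsup := hrec k h
        have hsSup : sSup ((fun α : ℝ =>
            T (α * k + c * k ^ l + c) + T ((1 - α) * k + c * k ^ l + c)) ''
          Set.Icc (1/3 : ℝ) (2/3)) ≤ d * (3*G*k - k^l) - (c*k^l + c) :=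
          Real.sSup_le hmem hnn
        linarith
  -- conclusion
  intro k hk0
  rcases le_or_gt k γ with h | h
  · rw [hTz k hk0 h]
    positivity
  · obtain ⟨n, hn⟩ := pow_unbounded_of_one_lt (k/γ) (by norm_num : (1:ℝ) < 4/3)
    have hkn : k ≤ γ * (4/3:ℝ)^n := by
      rw [div_lt_iff₀ hγ0] at hn
      linarith
    have hkey := key n k (by linarith) hkn
    have hKnn : 0 ≤ k ^ l := Real.rpow_nonneg hk0 l
    have hfin : d * (3*G*k - k^l) ≤ ε * k := by
      have h1 : (3*(d*G))*k ≤ ε*k := mul_le_mul_of_nonneg_right h3dGε hk0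
      have h2 : 0 ≤ d * k^l := mul_nonneg hd.le hKnn
      linarith [h1, h2]
    linarith
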